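/- Let V be a real Hilbert space, Q a real Hilbert space, b : V × Q → ℝ continuous bilinear. For each q ∈ Q define the supremizer s(q) ∈ V as the Riesz representative of the functional v ↦ b(v,q). If Q_N ⊆ Q is a finite-dimensional subspace and V_N ⊆ V contains s(q) for every q ∈ Q_N, then the pair (V_N, Q_N) satisfies the inf–sup condition with constant β_N = inf_{q ∈ Q_N, q≠0} ‖s(q)‖_V / ‖q‖_Q, provided β_N > 0. -/

import Mathlib

/-- Supremizer stabilization: let s(q) be the Riesz representative of v ↦ b(v,q).
If Q_N is finite-dimensional and V_N contains the supremizer s(q) of each q ∈ Q_N,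
then (V_N, Q_N) satisfies the inf–sup condition with constant
β_N = inf_{q ∈ Q_N, q ≠ 0} ‖s(q)‖/‖q‖, provided β_N > 0. -/
theorem stmt4 {V Q : Type*} [NormedAddCommGroup V] [InnerProductSpace ℝ V] [CompleteSpace V]
    [NormedAddCommGroup Q] [InnerProductSpace ℝ Q] [CompleteSpace Q]
    (b : V →L[ℝ] Q →L[ℝ] ℝ)
    (s : Q → V) (hs : ∀ q : Q, s q = (InnerProductSpace.toDual ℝ V).symm (b.flip q))
    (QN : Submodule ℝ Q) (hQN : FiniteDimensional ℝ QN)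
    (VN : Submodule ℝ V) (hsub : ∀ q ∈ QN, s q ∈ VN)
    (βN : ℝ) (hβN : βN = ⨅ q : {q : Q // q ∈ QN ∧ q ≠ 0}, ‖s q.1‖ / ‖q.1‖)
    (hpos : 0 < βN) :
    ∀ q ∈ QN, βN * ‖q‖ ≤ ⨆ v : {v : V // v ∈ VN ∧ v ≠ 0}, b v.1 q / ‖v.1‖ := by
  intro q hq
  have key : ∀ v : V, b v q = inner ℝ (s q) v := by
    intro v
    rw [hs q, InnerProductSpace.toDual_symm_apply]
    rfl
  by_cases hq0 : q = 0
  · subst hq0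
    simp only [norm_zero, mul_zero, map_zero, zero_div]
    by_cases hne : Nonempty {v : V // v ∈ VN ∧ v ≠ 0}
    · rw [ciSup_const]
    · have : IsEmpty {v : V // v ∈ VN ∧ v ≠ 0} := not_nonempty_iff.mp hne
      rw [Real.iSup_of_isEmpty]
  · have hqn : (0:ℝ) < ‖q‖ := norm_pos_iff.mpr hq0
    have hbdd : BddBelow (Set.range fun q : {q : Q // q ∈ QN ∧ q ≠ 0} => ‖s q.1‖ / ‖q.1‖) := by
      refine ⟨0, ?_⟩
      rintro x ⟨p, rfl⟩
      positivity
    have hle : βN ≤ ‖s q‖ / ‖q‖ := by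
      rw [hβN]
      exact ciInf_le hbdd ⟨q, hq, hq0⟩
    have hsq : βN * ‖q‖ ≤ ‖s q‖ := by
      rwa [le_div_iff₀ hqn] at hle
    have hsne : s q ≠ 0 := by
      intro h
      rw [h, norm_zero] at hsq
      nlinarith
    have hub : BddAbove (Set.range fun v : {v : V // v ∈ VN ∧ v ≠ 0} => b v.1 q / ‖v.1‖) := by
      refine ⟨‖b‖ * ‖q‖, ?_⟩
      rintro x ⟨v, rfl⟩
      have hvn : (0:ℝ) < ‖v.1‖ := norm_pos_iff.mpr v.2.2
      rw [div_le_iff₀ hvn]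
      calc b v.1 q ≤ ‖b v.1 q‖ := le_abs_self _
        _ ≤ ‖b‖ * ‖v.1‖ * ‖q‖ := b.le_opNorm₂ v.1 q
        _ = ‖b‖ * ‖q‖ * ‖v.1‖ := by ring
    have hmem : s q ∈ VN := hsub q hq
    have hval : b (s q) q / ‖s q‖ = ‖s q‖ := by
      rw [key (s q), real_inner_self_eq_norm_sq, sq, mul_div_assoc,
        div_self (norm_ne_zero_iff.mpr hsne), mul_one]
    calc βN * ‖q‖ ≤ ‖s q‖ := hsq
      _ = b (s q) q / ‖s q‖ := hval.symm
      _ ≤ ⨆ v : {v : V // v ∈ VN ∧ v ≠ 0}, b v.1 q / ‖v.1‖ :=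
        le_ciSup hub ⟨s q, hmem, hsne⟩
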